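/- Let V be a symmetric positive semidefinite n×n real matrix with Moore–Penrose pseudoinverse V⁺, and let X be a real n×m matrix whose column space is contained in the column space of V (equivalently, V V⁺ X = X). Set I = Xᵀ V⁺ X with Moore–Penrose pseudoinverse I⁺. Then trace((V⁺ − V⁺ X I⁺ Xᵀ V⁺) V) = rank(V) − rank(I). -/
import Mathlib

open Matrix

/-- `N` is a Moore–Penrose pseudoinverse of `M`: the four Penrose equations hold. -/
def IsMoorePenrose {n m : ℕ} (M : Matrix (Fin n) (Fin m) ℝ)
    (N : Matrix (Fin m) (Fin n) ℝ) : Prop :=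
  M * N * M = M ∧ N * M * N = N ∧ (M * N)ᵀ = M * N ∧ (N * M)ᵀ = N * M

/-- Trace of an idempotent real matrix equals its rank. -/
lemma trace_eq_rank_of_idem {k : ℕ} (P : Matrix (Fin k) (Fin k) ℝ) (h : P * P = P) :
    P.trace = (P.rank : ℝ) := by
  have hf : P.mulVecLin ∘ₗ P.mulVecLin = P.mulVecLin := by
    rw [← Matrix.mulVecLin_mul, h]
  have hproj : LinearMap.IsProj (LinearMap.range P.mulVecLin) P.mulVecLin := by
    refine ⟨fun x => LinearMap.mem_range_self _ x, ?_⟩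
    rintro x ⟨y, rfl⟩
    exact congrFun (congrArg DFunLike.coe hf) y
  have := hproj.trace
  rw [Matrix.rank, ← this]
  rw [LinearMap.trace_eq_matrix_trace ℝ (Pi.basisFun ℝ (Fin k))]
  congr 1
  ext i j
  simp [LinearMap.toMatrix_apply, Matrix.mulVec_single_one]

/-- Degrees of freedom of the global inconsistency statistic: if
`col(X) ⊆ col(V)` (equivalently `V V⁺ X = X`), then
`trace((V⁺ - V⁺ X I⁺ Xᵀ V⁺) V) = rank V - rank I` where `I = Xᵀ V⁺ X`. -/
theorem q_statistic_degrees_of_freedom {n m : ℕ}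
    (V : Matrix (Fin n) (Fin n) ℝ) (hV : V.PosSemidef)
    (Vplus : Matrix (Fin n) (Fin n) ℝ) (hVplus : IsMoorePenrose V Vplus)
    (X : Matrix (Fin n) (Fin m) ℝ)
    (hX : V * Vplus * X = X)
    (Iplus : Matrix (Fin m) (Fin m) ℝ)
    (hIplus : IsMoorePenrose (Xᵀ * Vplus * X) Iplus) :
    ((Vplus - Vplus * X * Iplus * Xᵀ * Vplus) * V).trace
      = (V.rank : ℝ) - ((Xᵀ * Vplus * X).rank : ℝ) := by
  obtain ⟨hV1, hV2, hV3, hV4⟩ := hVplus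
  obtain ⟨hI1, hI2, hI3, hI4⟩ := hIplus
  set W := Vplus
  set I := Xᵀ * W * X with hIdef
  set J := Iplus
  -- first term: trace (W * V) = rank V
  have hWVidem : (W * V) * (W * V) = W * V := by
    calc (W * V) * (W * V) = W * (V * W * V) := by simp only [Matrix.mul_assoc]
    _ = W * V := by rw [hV1]
  have hrankWV : (W * V).rank = V.rank := by
    refine le_antisymm (Matrix.rank_mul_le_right W V) ?_
    calc V.rank = (V * (W * V)).rank := by rw [show V * (W * V) = V * W * V by simp only [Matrix.mul_assoc], hV1]
    _ ≤ (W * V).rank := Matrix.rank_mul_le_right V (W * V)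
  have h1 : (W * V).trace = (V.rank : ℝ) := by
    rw [trace_eq_rank_of_idem _ hWVidem, hrankWV]
  -- second term: trace (W * X * J * Xᵀ * W * V) = rank I
  have hJIidem : (J * I) * (J * I) = J * I := by
    calc (J * I) * (J * I) = J * (I * J * I) := by simp only [Matrix.mul_assoc]
    _ = J * I := by rw [hI1]
  have hrankJI : (J * I).rank = I.rank := by
    refine le_antisymm (Matrix.rank_mul_le_right J I) ?_
    calc I.rank = (I * (J * I)).rank := by rw [show I * (J * I) = I * J * I by simp only [Matrix.mul_assoc], hI1]
    _ ≤ (J * I).rank := Matrix.rank_mul_le_right I (J * I)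
  have h2 : ((W * X * J * Xᵀ * W) * V).trace = (I.rank : ℝ) := by
    have e1 : (W * X * J * Xᵀ * W) * V = (W * X * J * Xᵀ) * (W * V) := by simp only [Matrix.mul_assoc]
    rw [e1, Matrix.trace_mul_comm, show (W * V) * (W * X * J * Xᵀ) = (W * V * W) * (X * J * Xᵀ) by simp only [Matrix.mul_assoc], hV2]
    rw [show W * (X * J * Xᵀ) = (W * X) * (J * Xᵀ) by simp only [Matrix.mul_assoc], Matrix.trace_mul_comm,
      show (J * Xᵀ) * (W * X) = J * I by rw [hIdef]; simp only [Matrix.mul_assoc]]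
    rw [trace_eq_rank_of_idem _ hJIidem, hrankJI]
  rw [Matrix.sub_mul, Matrix.trace_sub, h1, h2]
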